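/- Let (X,τ) be a Hausdorff topological space, A a unital subalgebra of the bounded continuous real-valued functions on X which separates the points of X and generates the topology (τ is the coarsest topology on X making every element of A continuous), and let m be a finite Radon measure on X. Then for every bounded upper semicontinuous function g : X → ℝ: (i) g(x) = inf{ h(x) : h ∈ A, h(y) ≥ g(y) for all y ∈ X } for every x ∈ X; (ii) ∫_X g dm = inf{ ∫_X h dm : h ∈ A, h(y) ≥ g(y) for all y ∈ X }. -/

import Mathlib

open Filter Set Topology MeasureTheory
open scoped ENNReal

set_option maxHeartbeats 1000000

lemma exists_poly_abs (M ε : ℝ) (hε : 0 < ε) :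
    ∃ p : Polynomial ℝ, ∀ t : ℝ, |t| ≤ M → abs (p.eval t - abs t) ≤ ε := by
  have hcont : Continuous fun x : Set.Icc (-M) M => |(x : ℝ)| :=
    continuous_abs.comp continuous_subtype_val
  set f : C(Set.Icc (-M) M, ℝ) := ⟨fun x => |(x : ℝ)|, hcont⟩ with hfdef
  have hf := continuousMap_mem_polynomialFunctions_closure (-M) M f
  rw [← SetLike.mem_coe, Subalgebra.topologicalClosure_coe] at hf
  obtain ⟨q, hq_mem, hq_dist⟩ := Metric.mem_closure_iff.mp hf ε hε
  obtain ⟨p, -, rfl⟩ := Subalgebra.mem_map.mp hq_mem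
  refine ⟨p, fun t ht => ?_⟩
  have hts : t ∈ Set.Icc (-M) M := by
    rcases abs_le.mp ht with ⟨h1, h2⟩; exact ⟨h1, h2⟩
  have h2 := (ContinuousMap.dist_apply_le_dist (f := f)
    (g := (Polynomial.toContinuousMapOnAlgHom _) p) ⟨t, hts⟩).trans_lt hq_dist
  rw [Real.dist_eq] at h2
  simp only [hfdef, ContinuousMap.coe_mk, Polynomial.toContinuousMapOnAlgHom_apply,
    Polynomial.toContinuousMapOn_apply, Polynomial.toContinuousMap_apply] at h2
  rw [abs_sub_comm]
  exact h2.le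


lemma basis_lemma {X : Type*} [tX : TopologicalSpace X] (A : Subalgebra ℝ (X → ℝ))
    (hAgen : tX = ⨅ f ∈ A, TopologicalSpace.induced f inferInstance)
    (x : X) (U : Set X) (hU : IsOpen U) (hx : x ∈ U) :
    ∃ f ∈ A, (∀ y, 0 ≤ f y) ∧ f x = 0 ∧ ∀ y, f y < 1 → y ∈ U := by
  have hnhds : U ∈ @nhds X tX x := hU.mem_nhds hx
  have hn2 : @nhds X tX x = ⨅ p : {f // f ∈ A}, Filter.comap p.1 (nhds (p.1 x)) := by
    rw [hAgen]
    rw [iInf_subtype']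
    rw [_root_.nhds_iInf]
    exact iInf_congr fun p => nhds_induced p.1 x
  rw [hn2] at hnhds
  rw [Filter.mem_iInf] at hnhds
  obtain ⟨I, hIfin, V, hV, hUeq⟩ := hnhds
  -- for each i ∈ I, get δ i > 0 such that |f_i y - f_i x| < δ i → y ∈ V i
  have key : ∀ i : I, ∃ δ : ℝ, 0 < δ ∧ ∀ y, |i.1.1 y - i.1.1 x| < δ → y ∈ V i := by
    intro i
    obtain ⟨W, hW, hWsub⟩ := Filter.mem_comap.mp (hV i)
    obtain ⟨δ, hδ, hball⟩ := Metric.mem_nhds_iff.mp hW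
    refine ⟨δ, hδ, fun y hy => ?_⟩
    apply hWsub
    simp only [Set.mem_preimage]
    apply hball
    rw [Metric.mem_ball, Real.dist_eq]
    exact hy
  choose δ hδpos hδ using key
  haveI : Fintype I := hIfin.fintype
  -- the function f
  set f : X → ℝ := ∑ i : I, (fun y => ((i.1.1 y - i.1.1 x) / δ i) ^ 2) with hfdef
  have hfy : ∀ y, f y = ∑ i : I, ((i.1.1 y - i.1.1 x) / δ i) ^ 2 := by
    intro y; rw [hfdef, Finset.sum_apply]
  have hfA : f ∈ A := by
    rw [hfdef]
    apply A.sum_mem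
    intro i _
    have h1 : (fun y => ((i.1.1 y - i.1.1 x) / δ i) ^ 2)
        = ((δ i)⁻¹ • (i.1.1 - (fun _ => i.1.1 x))) ^ 2 := by
      funext y
      simp [div_eq_inv_mul, Pi.pow_apply, Pi.smul_apply, Pi.sub_apply, mul_pow]
    rw [h1]
    exact A.pow_mem (A.smul_mem (A.sub_mem i.1.2 (A.algebraMap_mem (i.1.1 x))) _) 2
  refine ⟨f, hfA, fun y => ?_, ?_, fun yy hyy => ?_⟩
  · rw [hfy]; exact Finset.sum_nonneg fun i _ => sq_nonneg _
  · rw [hfy]; simp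
  · rw [hUeq]
    rw [Set.mem_iInter]
    intro i
    apply hδ i
    have hterm : ((i.1.1 yy - i.1.1 x) / δ i) ^ 2 < 1 := by
      have hle : ((i.1.1 yy - i.1.1 x) / δ i) ^ 2 ≤ f yy := by
        rw [hfy]
        exact Finset.single_le_sum (fun j _ => sq_nonneg ((j.1.1 yy - j.1.1 x) / δ j))
          (Finset.mem_univ i)
      linarith
    have habs : |(i.1.1 yy - i.1.1 x) / δ i| < 1 := by
      nlinarith [sq_abs ((i.1.1 yy - i.1.1 x) / δ i), abs_nonneg ((i.1.1 yy - i.1.1 x) / δ i)]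
    rw [abs_div, abs_of_pos (hδpos i)] at habs
    rw [div_lt_one (hδpos i)] at habs
    exact habs


lemma pointwise_lemma {X : Type*} [tX : TopologicalSpace X] (A : Subalgebra ℝ (X → ℝ))
    (hAgen : tX = ⨅ f ∈ A, TopologicalSpace.induced f inferInstance)
    (g : X → ℝ) (hgu : UpperSemicontinuous g) (M : ℝ) (hM : ∀ y, g y ≤ M)
    (x : X) (ε : ℝ) (hε : 0 < ε) :
    ∃ h ∈ A, (∀ y, g y ≤ h y) ∧ h x ≤ g x + ε := by
  have hUopen : IsOpen {y | g y < g x + ε} := by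
    have := upperSemicontinuous_iff_isOpen_preimage.mp hgu (g x + ε)
    simpa [Set.preimage, Set.Iio] using this
  obtain ⟨f, hfA, hf0, hfx, hfU⟩ := basis_lemma A hAgen x _ hUopen (by simp [Set.mem_setOf_eq]; linarith)
  set c : ℝ := max 0 (M - g x - ε) with hc
  refine ⟨(fun _ => g x + ε) + c • f, ?_, fun y => ?_, ?_⟩
  · exact A.add_mem (A.algebraMap_mem (g x + ε)) (A.smul_mem hfA c)
  · simp only [Pi.add_apply, Pi.smul_apply, smul_eq_mul]
    rcases lt_or_ge (f y) 1 with hfy | hfy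
    · have hy := hfU y hfy
      simp only [Set.mem_setOf_eq] at hy
      have : 0 ≤ c * f y := mul_nonneg (le_max_left _ _) (hf0 y)
      linarith
    · have h1 : c * 1 ≤ c * f y := by
        apply mul_le_mul_of_nonneg_left hfy (le_max_left _ _)
      have h2 : M - g x - ε ≤ c := le_max_right _ _
      have := hM y
      linarith
  · simp [hfx]


section Helpers

variable {X : Type*} {A : Subalgebra ℝ (X → ℝ)}

/-- `h` is uniformly approximable by elements of `A`. -/
def Appr (A : Subalgebra ℝ (X → ℝ)) (h : X → ℝ) : Prop :=
  ∀ ε : ℝ, 0 < ε → ∃ a ∈ A, ∀ y, |h y - a y| ≤ ε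

lemma appr_of_mem {a : X → ℝ} (ha : a ∈ A) : Appr A a :=
  fun ε hε => ⟨a, ha, fun y => by simp [hε.le]⟩

lemma appr_const (c : ℝ) : Appr A (fun _ => c) :=
  appr_of_mem (A.algebraMap_mem c)

lemma appr_add {h₁ h₂ : X → ℝ} (H1 : Appr A h₁) (H2 : Appr A h₂) :
    Appr A (fun y => h₁ y + h₂ y) := by
  intro ε hε
  obtain ⟨a₁, ha₁, hb₁⟩ := H1 (ε / 2) (by linarith)
  obtain ⟨a₂, ha₂, hb₂⟩ := H2 (ε / 2) (by linarith)
  refine ⟨a₁ + a₂, A.add_mem ha₁ ha₂, fun y => ?_⟩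
  have := abs_add_le (h₁ y - a₁ y) (h₂ y - a₂ y)
  have e : h₁ y + h₂ y - (a₁ + a₂) y = (h₁ y - a₁ y) + (h₂ y - a₂ y) := by
    simp [Pi.add_apply]; ring
  rw [e]
  calc |(h₁ y - a₁ y) + (h₂ y - a₂ y)| ≤ |h₁ y - a₁ y| + |h₂ y - a₂ y| := abs_add_le _ _
    _ ≤ ε / 2 + ε / 2 := add_le_add (hb₁ y) (hb₂ y)
    _ = ε := by ring

lemma appr_smul (c : ℝ) {h : X → ℝ} (H : Appr A h) : Appr A (fun y => c * h y) := by
  intro ε hε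
  have hc : 0 < |c| + 1 := by positivity
  obtain ⟨a, ha, hb⟩ := H (ε / (|c| + 1)) (by positivity)
  refine ⟨c • a, A.smul_mem ha c, fun y => ?_⟩
  have e : c * h y - (c • a) y = c * (h y - a y) := by
    simp [Pi.smul_apply, smul_eq_mul]; ring
  rw [e, abs_mul]
  calc |c| * |h y - a y| ≤ (|c| + 1) * (ε / (|c| + 1)) := by
        apply mul_le_mul (by linarith) (hb y) (abs_nonneg _) (by positivity)
    _ = ε := by field_simp


lemma poly_mem {a : X → ℝ} (ha : a ∈ A) (p : Polynomial ℝ) :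
    (fun y => p.eval (a y)) ∈ A := by
  induction p using Polynomial.induction_on' with
  | add p q hp hq =>
    have : (fun y => Polynomial.eval (a y) (p + q))
        = (fun y => Polynomial.eval (a y) p) + (fun y => Polynomial.eval (a y) q) := by
      funext y; simp [Polynomial.eval_add]
    rw [this]; exact A.add_mem hp hq
  | monomial n c =>
    have : (fun y => Polynomial.eval (a y) (Polynomial.monomial n c)) = c • (a ^ n) := by
      funext y; simp [Polynomial.eval_monomial]
    rw [this]; exact A.smul_mem (A.pow_mem ha n) c

lemma appr_bounded {h : X → ℝ} (H : Appr A h) (hAb : ∀ f ∈ A, ∃ C : ℝ, ∀ x, |f x| ≤ C) :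
    ∃ C : ℝ, ∀ y, |h y| ≤ C := by
  obtain ⟨a, ha, hb⟩ := H 1 one_pos
  obtain ⟨C, hC⟩ := hAb a ha
  exact ⟨C + 1, fun y => by
    have := abs_add_le (h y - a y) (a y)
    simp only [sub_add_cancel] at this
    have := hb y; have := hC y
    calc |h y| = |(h y - a y) + a y| := by ring_nf
      _ ≤ |h y - a y| + |a y| := abs_add_le _ _
      _ ≤ C + 1 := by linarith⟩

lemma appr_abs {h : X → ℝ} (H : Appr A h) (hAb : ∀ f ∈ A, ∃ C : ℝ, ∀ x, |f x| ≤ C) :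
    Appr A (fun y => |h y|) := by
  intro ε hε
  obtain ⟨a, ha, hb⟩ := H (ε / 2) (by linarith)
  obtain ⟨C, hC⟩ := hAb a ha
  obtain ⟨p, hp⟩ := exists_poly_abs C (ε / 2) (by linarith)
  refine ⟨fun y => p.eval (a y), poly_mem ha p, fun y => ?_⟩
  have h1 : abs (p.eval (a y) - |a y|) ≤ ε / 2 := hp (a y) (hC y)
  have h2 : abs (abs (h y) - abs (a y)) ≤ ε / 2 := (abs_abs_sub_abs_le_abs_sub _ _).trans (hb y)
  calc abs ((abs (h y)) - p.eval (a y))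
      = abs (((abs (h y)) - abs (a y)) + ((abs (a y)) - p.eval (a y))) := by ring_nf
    _ ≤ abs ((abs (h y)) - abs (a y)) + abs ((abs (a y)) - p.eval (a y)) := abs_add_le _ _
    _ ≤ ε / 2 + ε / 2 := add_le_add h2 (by rw [abs_sub_comm]; exact h1)
    _ = ε := by ring

lemma appr_sub {h₁ h₂ : X → ℝ} (H1 : Appr A h₁) (H2 : Appr A h₂) :
    Appr A (fun y => h₁ y - h₂ y) := by
  have := appr_add H1 (appr_smul (-1) H2)
  simpa [sub_eq_add_neg] using this

lemma appr_min {h₁ h₂ : X → ℝ} (H1 : Appr A h₁) (H2 : Appr A h₂)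
    (hAb : ∀ f ∈ A, ∃ C : ℝ, ∀ x, |f x| ≤ C) :
    Appr A (fun y => min (h₁ y) (h₂ y)) := by
  have habs := appr_abs (appr_sub H1 H2) hAb
  have := appr_smul (1/2 : ℝ) (appr_sub (appr_add H1 H2) habs)
  have e : (fun y => (1:ℝ)/2 * ((h₁ y + h₂ y) - |h₁ y - h₂ y|)) = fun y => min (h₁ y) (h₂ y) := by
    funext y
    rcases le_total (h₁ y) (h₂ y) with hle | hle
    · rw [min_eq_left hle, abs_of_nonpos (by linarith)]; ring
    · rw [min_eq_right hle, abs_of_nonneg (by linarith)]; ring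
  rw [← e]; exact this

lemma appr_max {h₁ h₂ : X → ℝ} (H1 : Appr A h₁) (H2 : Appr A h₂)
    (hAb : ∀ f ∈ A, ∃ C : ℝ, ∀ x, |f x| ≤ C) :
    Appr A (fun y => max (h₁ y) (h₂ y)) := by
  have habs := appr_abs (appr_sub H1 H2) hAb
  have := appr_smul (1/2 : ℝ) (appr_add (appr_add H1 H2) habs)
  have e : (fun y => (1:ℝ)/2 * ((h₁ y + h₂ y) + |h₁ y - h₂ y|)) = fun y => max (h₁ y) (h₂ y) := by
    funext y
    rcases le_total (h₁ y) (h₂ y) with hle | hle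
    · rw [max_eq_right hle, abs_of_nonpos (by linarith)]; ring
    · rw [max_eq_left hle, abs_of_nonneg (by linarith)]; ring
  rw [← e]; exact this

lemma appr_continuous [TopologicalSpace X] {h : X → ℝ} (H : Appr A h)
    (hAc : ∀ f ∈ A, Continuous f) : Continuous h := by
  rw [continuous_iff_continuousAt]
  intro x
  unfold ContinuousAt
  rw [Metric.tendsto_nhds]
  intro ε hε
  obtain ⟨a, ha, hb⟩ := H (ε / 4) (by linarith)
  have hac := hAc a ha
  have hev : ∀ᶠ y in nhds x, dist (a y) (a x) < ε / 4 :=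
    Metric.tendsto_nhds.mp hac.continuousAt (ε / 4) (by linarith)
  filter_upwards [hev] with y h1
  have h2 := hb y; have h3 := hb x
  rw [Real.dist_eq] at h1 ⊢
  calc |h y - h x| = |(h y - a y) + (a y - a x) + (a x - h x)| := by ring_nf
    _ ≤ |(h y - a y) + (a y - a x)| + |a x - h x| := abs_add_le _ _
    _ ≤ |h y - a y| + |a y - a x| + |a x - h x| := by
        have := abs_add_le (h y - a y) (a y - a x); linarith
    _ < ε := by
        have h3' : |a x - h x| ≤ ε / 4 := by rw [abs_sub_comm]; exact h3
        linarith


lemma appr_finset_inf' {ι : Type*} (hAb : ∀ f ∈ A, ∃ C : ℝ, ∀ x, |f x| ≤ C)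
    (t : Finset ι) (ht : t.Nonempty) (f : ι → X → ℝ) (hf : ∀ i ∈ t, Appr A (f i)) :
    Appr A (fun y => t.inf' ht fun i => f i y) := by
  revert hf
  induction ht using Finset.Nonempty.cons_induction with
  | singleton i => intro hf; simpa using hf i (by simp)
  | cons i s his hs ih =>
    intro hf
    have h1 : Appr A (fun y => s.inf' hs fun j => f j y) :=
      ih fun j hj => hf j (Finset.mem_cons_of_mem hj)
    have h2 : Appr A (f i) := hf i (Finset.mem_cons_self i s)
    have := appr_min h2 h1 hAb
    have e : (fun y => min (f i y) (s.inf' hs fun j => f j y))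
        = fun y => (Finset.cons i s his).inf' (Finset.cons_nonempty his) fun j => f j y := by
      funext y; rw [Finset.inf'_cons]
    rw [e] at this
    exact this

lemma urysohn_lemma [tX : TopologicalSpace X]
    (hAgen : tX = ⨅ f ∈ A, TopologicalSpace.induced f inferInstance)
    (hAc : ∀ f ∈ A, Continuous f) (hAb : ∀ f ∈ A, ∃ C : ℝ, ∀ x, |f x| ≤ C)
    (C V : Set X) (hC : IsCompact C) (hV : IsOpen V) (hCV : C ⊆ V) :
    ∃ w : X → ℝ, Appr A w ∧ (∀ y, 0 ≤ w y ∧ w y ≤ 1) ∧ (∀ y ∈ C, w y = 1) ∧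
      ∀ y, y ∉ V → w y = 0 := by
  rcases C.eq_empty_or_nonempty with hCe | hCne
  · refine ⟨fun _ => 0, appr_const 0, fun y => ⟨le_refl _, zero_le_one⟩, ?_, fun y _ => rfl⟩
    intro y hy; rw [hCe] at hy; exact absurd hy (Set.notMem_empty y)
  · have hbase : ∀ x : X, x ∈ C → ∃ f, f ∈ A ∧ (∀ y, 0 ≤ f y) ∧ f x = 0 ∧
        ∀ y, f y < 1 → y ∈ V := by
      intro x hx
      obtain ⟨f, h1, h2, h3, h4⟩ := basis_lemma A hAgen x V hV (hCV hx)
      exact ⟨f, h1, h2, h3, h4⟩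
    choose! f hfA hf0 hfx hfU using hbase
    have hcover := hC.elim_nhds_subcover' (fun x hx => {y | f x y < 1/2}) (by
      intro x hx
      have : IsOpen {y | f x y < 1/2} := by
        have := (hAc (f x) (hfA x hx)).isOpen_preimage (Set.Iio (1/2)) isOpen_Iio
        simpa [Set.preimage, Set.Iio] using this
      exact this.mem_nhds (by simp [Set.mem_setOf_eq, hfx x hx]))
    obtain ⟨t, htcover⟩ := hcover
    have htne : t.Nonempty := by
      obtain ⟨x0, hx0⟩ := hCne
      have := htcover hx0
      rw [Set.mem_iUnion] at this
      obtain ⟨i, hi⟩ := this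
      rw [Set.mem_iUnion] at hi
      obtain ⟨hit, _⟩ := hi
      exact ⟨i, hit⟩
    set u : X → ℝ := fun y => t.inf' htne fun i => f i.1 y with hudef
    have hu_appr : Appr A u := appr_finset_inf' hAb t htne _
      (fun i hi => appr_of_mem (hfA i.1 i.2))
    have hu0 : ∀ y, 0 ≤ u y := fun y =>
      Finset.le_inf' htne _ fun i _ => hf0 i.1 i.2 y
    have huC : ∀ y ∈ C, u y ≤ 1/2 := by
      intro y hy
      have := htcover hy
      rw [Set.mem_iUnion] at this
      obtain ⟨i, hi⟩ := this
      rw [Set.mem_iUnion] at hi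
      obtain ⟨hit, hiy⟩ := hi
      simp only [Set.mem_setOf_eq] at hiy
      exact le_trans (Finset.inf'_le _ hit) hiy.le
    have huV : ∀ y, y ∉ V → 1 ≤ u y := by
      intro y hy
      apply Finset.le_inf' htne
      intro i _
      by_contra hlt
      push_neg at hlt
      exact hy (hfU i.1 i.2 y hlt)
    refine ⟨fun y => min 1 (max 0 (2 - 2 * u y)), ?_, fun y => ⟨?_, ?_⟩, ?_, ?_⟩
    · apply appr_min (appr_const 1) _ hAb
      apply appr_max (appr_const 0) _ hAb
      exact appr_sub (appr_const 2) (appr_smul 2 hu_appr)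
    · exact le_min zero_le_one (le_max_left _ _)
    · exact min_le_left _ _
    · intro y hy
      have h1 : (1:ℝ) ≤ 2 - 2 * u y := by have := huC y hy; linarith
      show min (1:ℝ) (max 0 (2 - 2 * u y)) = 1
      rw [max_eq_right (by linarith : (0:ℝ) ≤ 2 - 2 * u y), min_eq_left h1]
    · intro y hy
      have h1 : 2 - 2 * u y ≤ 0 := by have := huV y hy; linarith
      show min (1:ℝ) (max 0 (2 - 2 * u y)) = 0
      rw [max_eq_left h1]
      simp

lemma bounded_continuous_integrable [TopologicalSpace X] [MeasurableSpace X] [OpensMeasurableSpace X]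
    (m : Measure X) [IsFiniteMeasure m] (f : X → ℝ) (hf : Continuous f)
    (Cb : ℝ) (hC : ∀ y, |f y| ≤ Cb) : Integrable f m :=
  (integrable_const Cb).mono' hf.aestronglyMeasurable
    (Filter.Eventually.of_forall fun y => by simpa using hC y)

lemma indicator_lemma [tX : TopologicalSpace X] [T2Space X] [MeasurableSpace X] [BorelSpace X]
    (m : Measure X) [IsFiniteMeasure m] [m.InnerRegular]
    (hAgen : tX = ⨅ f ∈ A, TopologicalSpace.induced f inferInstance)
    (hAc : ∀ f ∈ A, Continuous f) (hAb : ∀ f ∈ A, ∃ C : ℝ, ∀ x, |f x| ≤ C)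
    (F : Set X) (hF : IsClosed F) (δ : ℝ) (hδ : 0 < δ) :
    ∃ v : X → ℝ, Appr A v ∧ (∀ y, 0 ≤ v y ∧ v y ≤ 1) ∧ (∀ y ∈ F, v y = 1) ∧
      ∫ y, v y ∂m ≤ (m F).toReal + δ := by
  have hFcm : MeasurableSet Fᶜ := hF.measurableSet.compl
  obtain ⟨C, hCsub, hCcomp, hCm⟩ := hFcm.exists_isCompact_lt_add (measure_ne_top m Fᶜ)
    (ε := ENNReal.ofReal δ) (by simp [hδ])
  obtain ⟨w, hw_appr, hw01, hwC, hwV⟩ := urysohn_lemma hAgen hAc hAb C Fᶜ hCcomp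
    hF.isOpen_compl hCsub
  set v : X → ℝ := fun y => 1 - w y with hvdef
  have hv_appr : Appr A v := appr_sub (appr_const 1) hw_appr
  have hv01 : ∀ y, 0 ≤ v y ∧ v y ≤ 1 := fun y => ⟨by have := (hw01 y).2; simp [hvdef]; linarith,
    by have := (hw01 y).1; simp [hvdef]; linarith⟩
  have hvF : ∀ y ∈ F, v y = 1 := by
    intro y hy
    have : w y = 0 := hwV y (by simp [hy])
    simp [hvdef, this]
  have hvcont : Continuous v := appr_continuous hv_appr hAc
  have hvint : Integrable v m := bounded_continuous_integrable m v hvcont 1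
    (fun y => abs_le.mpr ⟨by linarith [(hv01 y).1], (hv01 y).2⟩)
  have hCc_meas : MeasurableSet Cᶜ := hCcomp.isClosed.measurableSet.compl
  have hle : ∀ y, v y ≤ Set.indicator Cᶜ (fun _ => (1:ℝ)) y := by
    intro y
    by_cases hy : y ∈ Cᶜ
    · rw [Set.indicator_of_mem hy]; exact (hv01 y).2
    · rw [Set.indicator_of_notMem hy]
      have : w y = 1 := hwC y (by simpa using hy)
      simp [hvdef, this]
  have hind_int : Integrable (Set.indicator Cᶜ (fun _ => (1:ℝ))) m :=
    (integrable_const 1).indicator hCc_meas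
  have h1 : ∫ y, v y ∂m ≤ ∫ y, Set.indicator Cᶜ (fun _ => (1:ℝ)) y ∂m :=
    integral_mono hvint hind_int hle
  have h2 : ∫ y, Set.indicator Cᶜ (fun _ => (1:ℝ)) y ∂m = (m Cᶜ).toReal := by
    rw [integral_indicator_const (1:ℝ) hCc_meas]; simp; rfl
  have h3 : m Cᶜ ≤ m F + ENNReal.ofReal δ := by
    have hsub : Cᶜ ⊆ F ∪ (Fᶜ \ C) := by
      intro y hy
      by_cases hyF : y ∈ F
      · exact Or.inl hyF
      · exact Or.inr ⟨hyF, hy⟩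
    have hdiff : m (Fᶜ \ C) ≤ ENNReal.ofReal δ := by
      rw [measure_diff hCsub hCcomp.isClosed.measurableSet.nullMeasurableSet
        (measure_ne_top m C)]
      rw [tsub_le_iff_right]
      rw [add_comm]
      exact hCm.le
    calc m Cᶜ ≤ m (F ∪ (Fᶜ \ C)) := measure_mono hsub
      _ ≤ m F + m (Fᶜ \ C) := measure_union_le _ _
      _ ≤ m F + ENNReal.ofReal δ := add_le_add le_rfl hdiff
  have h4 : (m Cᶜ).toReal ≤ (m F).toReal + δ := by
    have hne : m F + ENNReal.ofReal δ ≠ ⊤ := by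
      simp [measure_ne_top m F, ENNReal.ofReal_ne_top]
    calc (m Cᶜ).toReal ≤ (m F + ENNReal.ofReal δ).toReal := ENNReal.toReal_mono hne h3
      _ = (m F).toReal + δ := by
          rw [ENNReal.toReal_add (measure_ne_top m F) ENNReal.ofReal_ne_top,
            ENNReal.toReal_ofReal hδ.le]
  exact ⟨v, hv_appr, hv01, hvF, by linarith⟩

lemma appr_sum {ι : Type*} (t : Finset ι) (f : ι → X → ℝ) (hf : ∀ i ∈ t, Appr A (f i)) :
    Appr A (fun y => ∑ i ∈ t, f i y) := by
  revert hf
  induction t using Finset.cons_induction with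
  | empty => intro _; simpa using appr_const (A := A) 0
  | cons i s his ih =>
    intro hf
    have h1 := appr_add (hf i (Finset.mem_cons_self i s))
      (ih fun j hj => hf j (Finset.mem_cons_of_mem hj))
    have e : (fun y => f i y + ∑ j ∈ s, f j y) = fun y => ∑ j ∈ Finset.cons i s his, f j y := by
      funext y; rw [Finset.sum_cons]
    rw [e] at h1
    exact h1

lemma integral_lemma [tX : TopologicalSpace X] [T2Space X] [MeasurableSpace X] [BorelSpace X]
    (m : Measure X) [IsFiniteMeasure m] [m.InnerRegular]
    (hAgen : tX = ⨅ f ∈ A, TopologicalSpace.induced f inferInstance)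
    (hAc : ∀ f ∈ A, Continuous f) (hAb : ∀ f ∈ A, ∃ C : ℝ, ∀ x, |f x| ≤ C)
    (g : X → ℝ) (hgu : UpperSemicontinuous g) (M : ℝ) (hM0 : 0 < M) (hM : ∀ y, |g y| ≤ M)
    (ε : ℝ) (hε : 0 < ε) :
    ∃ h ∈ A, (∀ y, g y ≤ h y) ∧ ∫ y, h y ∂m ≤ (∫ y, g y ∂m) + ε := by
  set mX : ℝ := (m Set.univ).toReal with hmX
  have hmX0 : 0 ≤ mX := ENNReal.toReal_nonneg
  -- choose n
  obtain ⟨n0, hn0⟩ := exists_nat_ge (8 * M * (mX + 1) / ε)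
  set n : ℕ := n0 + 1 with hn
  have hnpos : 0 < n := Nat.succ_pos n0
  have hnR : (0:ℝ) < n := by exact_mod_cast hnpos
  have hnbig : 8 * M * (mX + 1) / ε ≤ n := le_trans hn0 (by exact_mod_cast Nat.le_succ n0)
  set Δ : ℝ := 2 * M / n with hΔ
  have hΔpos : 0 < Δ := by positivity
  have hnΔ : (n : ℝ) * Δ = 2 * M := by rw [hΔ]; field_simp
  have hΔmX : Δ * (mX + 1) ≤ ε / 4 := by
    rw [hΔ, div_mul_eq_mul_div, div_le_iff₀ hnR]
    rw [div_le_iff₀ hε] at hnbig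
    nlinarith
  set δ : ℝ := ε / (16 * M) with hδdef
  have hδpos : 0 < δ := by positivity
  -- the closed superlevel sets
  set F : ℕ → Set X := fun i => {y | -M + i * Δ ≤ g y} with hF
  have hFclosed : ∀ i, IsClosed (F i) := by
    intro i
    have h1 : F i = (g ⁻¹' (Set.Iio (-M + i * Δ)))ᶜ := by
      ext y; simp [hF, Set.mem_preimage, not_lt]
    rw [h1]
    exact (upperSemicontinuous_iff_isOpen_preimage.mp hgu _).isClosed_compl
  have hFmeas : ∀ i, MeasurableSet (F i) := fun i => (hFclosed i).measurableSet
  choose v hva hv01 hvF hvI using fun i : ℕ =>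
    indicator_lemma m hAgen hAc hAb (F i) (hFclosed i) δ hδpos
  have hv_cont : ∀ i, Continuous (v i) := fun i => appr_continuous (hva i) hAc
  have hv_int : ∀ i, Integrable (v i) m := fun i =>
    bounded_continuous_integrable m (v i) (hv_cont i) 1
      (fun y => abs_le.mpr ⟨by linarith [(hv01 i y).1], (hv01 i y).2⟩)
  have hWint : ∀ i, Integrable (fun y => Δ * v i y) m := fun i => (hv_int i).const_mul Δ
  set h0 : X → ℝ := fun y => -M + ∑ i ∈ Finset.range n, Δ * v i y with hh0
  have h0_appr : Appr A h0 :=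
    appr_add (appr_const (-M)) (appr_sum (Finset.range n) (fun i y => Δ * v i y)
      (fun i _ => appr_smul Δ (hva i)))
  have h0_bdd : ∀ y, |h0 y| ≤ 3 * M := by
    intro y
    have hsum0 : 0 ≤ ∑ i ∈ Finset.range n, Δ * v i y :=
      Finset.sum_nonneg fun i _ => mul_nonneg hΔpos.le (hv01 i y).1
    have hsum1 : ∑ i ∈ Finset.range n, Δ * v i y ≤ 2 * M := by
      calc ∑ i ∈ Finset.range n, Δ * v i y ≤ ∑ i ∈ Finset.range n, Δ :=
            Finset.sum_le_sum fun i _ => by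
              have := (hv01 i y).2; nlinarith [hΔpos.le]
        _ = n * Δ := by rw [Finset.sum_const, Finset.card_range, nsmul_eq_mul]
        _ = 2 * M := hnΔ
    rw [abs_le]
    constructor <;> simp only [hh0] <;> nlinarith
  have h0_cont : Continuous h0 := appr_continuous h0_appr hAc
  have h0_int : Integrable h0 m := bounded_continuous_integrable m h0 h0_cont _ h0_bdd
  -- pointwise bound g ≤ h0
  have hpt : ∀ y, g y ≤ h0 y := by
    intro y
    set t : ℝ := (g y + M) / Δ with htdef
    have hgy := abs_le.mp (hM y)
    have ht0 : 0 ≤ t := div_nonneg (by linarith [hgy.1]) hΔpos.le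
    have htΔ : t * Δ = g y + M := div_mul_cancel₀ _ hΔpos.ne'
    set jn : ℕ := min n (⌊t⌋₊ + 1) with hjn
    have hsum : (jn : ℝ) * Δ ≤ ∑ i ∈ Finset.range n, Δ * v i y := by
      have hsub : Finset.range jn ⊆ Finset.range n := Finset.range_subset_range.mpr (min_le_left _ _)
      have hterm : ∀ i ∈ Finset.range jn, Δ * v i y = Δ := by
        intro i hi
        have hij : i < ⌊t⌋₊ + 1 := lt_of_lt_of_le (Finset.mem_range.mp hi) (min_le_right _ _)
        have hit : (i : ℝ) ≤ t := by
          have h1 : (i : ℝ) ≤ (⌊t⌋₊ : ℝ) := by exact_mod_cast Nat.lt_succ_iff.mp hij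
          exact h1.trans (Nat.floor_le ht0)
        have hyF : y ∈ F i := by
          simp only [hF, Set.mem_setOf_eq]
          have h2 := mul_le_mul_of_nonneg_right hit hΔpos.le
          rw [htΔ] at h2
          linarith
        rw [hvF i y hyF, mul_one]
      calc (jn : ℝ) * Δ = ∑ _i ∈ Finset.range jn, Δ := by
            rw [Finset.sum_const, Finset.card_range, nsmul_eq_mul]
        _ = ∑ i ∈ Finset.range jn, Δ * v i y := (Finset.sum_congr rfl hterm).symm
        _ ≤ ∑ i ∈ Finset.range n, Δ * v i y :=
            Finset.sum_le_sum_of_subset_of_nonneg hsub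
              (fun i _ _ => mul_nonneg hΔpos.le (hv01 i y).1)
    have hg : g y ≤ -M + jn * Δ := by
      rcases le_or_gt n (⌊t⌋₊ + 1) with hcase | hcase
      · have hjeq : jn = n := min_eq_left hcase
        rw [hjeq, hnΔ]
        linarith [hgy.2]
      · have hjeq : jn = ⌊t⌋₊ + 1 := min_eq_right hcase.le
        have hlt : t < (jn : ℝ) := by
          rw [hjeq]; push_cast; exact Nat.lt_floor_add_one t
        have h2 := mul_lt_mul_of_pos_right hlt hΔpos
        rw [htΔ] at h2
        linarith
    calc g y ≤ -M + jn * Δ := hg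
      _ ≤ h0 y := by simp only [hh0]; linarith [hsum]
  -- integral of h0
  have hint_h0 : ∫ y, h0 y ∂m = -M * mX + ∑ i ∈ Finset.range n, Δ * ∫ y, v i y ∂m := by
    have e1 : ∫ y, h0 y ∂m
        = ∫ y, ((fun _ => -M) y + (fun y => ∑ i ∈ Finset.range n, Δ * v i y) y) ∂m := rfl
    rw [e1, integral_add (integrable_const _) (integrable_finset_sum _ fun i _ => hWint i),
      integral_const, integral_finset_sum _ fun i _ => hWint i]
    simp only [smul_eq_mul, hmX, Measure.real]
    congr 1
    · ring
    · exact Finset.sum_congr rfl fun i _ => integral_const_mul Δ (v i)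
  -- the step function s
  set s : X → ℝ := fun y => -M + ∑ i ∈ Finset.range n, Δ * Set.indicator (F i) (fun _ => 1) y
    with hs
  have hind_int : ∀ i, Integrable (fun y => Δ * Set.indicator (F i) (fun _ => (1:ℝ)) y) m :=
    fun i => ((integrable_const (1:ℝ)).indicator (hFmeas i)).const_mul Δ
  have hs_int : Integrable s m := by
    apply Integrable.add (integrable_const _)
    exact integrable_finset_sum _ fun i _ => hind_int i
  have hint_s : ∫ y, s y ∂m = -M * mX + ∑ i ∈ Finset.range n, Δ * (m (F i)).toReal := by
    have e1 : ∫ y, s y ∂m = ∫ y, ((fun _ => -M) y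
        + (fun y => ∑ i ∈ Finset.range n, Δ * Set.indicator (F i) (fun _ => (1:ℝ)) y) y) ∂m := rfl
    rw [e1, integral_add (integrable_const _) (integrable_finset_sum _ fun i _ => hind_int i),
      integral_const, integral_finset_sum _ fun i _ => hind_int i]
    simp only [smul_eq_mul, hmX, Measure.real]
    congr 1
    · ring
    · refine Finset.sum_congr rfl fun i _ => ?_
      rw [integral_const_mul, integral_indicator_const (1:ℝ) (hFmeas i)]
      simp [Measure.real]
  -- s ≤ g + Δ
  have hsle : ∀ y, s y ≤ g y + Δ := by
    intro y
    set t : ℝ := (g y + M) / Δ with htdef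
    have hgy := abs_le.mp (hM y)
    have ht0 : 0 ≤ t := div_nonneg (by linarith [hgy.1]) hΔpos.le
    have hterm : ∀ i ∈ Finset.range n, Δ * Set.indicator (F i) (fun _ => (1:ℝ)) y
        ≤ (if i ≤ ⌊t⌋₊ then Δ else 0) := by
      intro i _
      by_cases hy : y ∈ F i
      · have hiΔ : (i : ℝ) * Δ ≤ g y + M := by
          have := hy
          simp only [hF, Set.mem_setOf_eq] at this
          linarith
        have hit : (i : ℝ) ≤ t := (le_div_iff₀ hΔpos).mpr hiΔ
        have hifl : i ≤ ⌊t⌋₊ := Nat.le_floor hit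
        rw [if_pos hifl, Set.indicator_of_mem hy, mul_one]
      · rw [Set.indicator_of_notMem hy, mul_zero]
        split <;> simp [hΔpos.le]
    have hsum : ∑ i ∈ Finset.range n, Δ * Set.indicator (F i) (fun _ => (1:ℝ)) y
        ≤ ((⌊t⌋₊ : ℝ) + 1) * Δ := by
      calc ∑ i ∈ Finset.range n, Δ * Set.indicator (F i) (fun _ => (1:ℝ)) y
          ≤ ∑ i ∈ Finset.range n, (if i ≤ ⌊t⌋₊ then Δ else 0) := Finset.sum_le_sum hterm
        _ = ∑ i ∈ (Finset.range n).filter (fun i => i ≤ ⌊t⌋₊), Δ := by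
            rw [Finset.sum_filter]
        _ ≤ ((⌊t⌋₊ : ℝ) + 1) * Δ := by
            rw [Finset.sum_const, nsmul_eq_mul]
            apply mul_le_mul_of_nonneg_right _ hΔpos.le
            have hcard : ((Finset.range n).filter (fun i => i ≤ ⌊t⌋₊)).card ≤ ⌊t⌋₊ + 1 := by
              have hsub : (Finset.range n).filter (fun i => i ≤ ⌊t⌋₊)
                  ⊆ Finset.range (⌊t⌋₊ + 1) := by
                intro i hi
                rw [Finset.mem_range, Nat.lt_succ_iff]
                exact (Finset.mem_filter.mp hi).2
              simpa using Finset.card_le_card hsub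
            exact_mod_cast hcard
    have hfl : (⌊t⌋₊ : ℝ) ≤ t := Nat.floor_le ht0
    have htΔ : t * Δ = g y + M := div_mul_cancel₀ _ hΔpos.ne'
    have h2 : ((⌊t⌋₊ : ℝ) + 1) * Δ ≤ g y + M + Δ := by nlinarith
    simp only [hs]
    linarith
  -- integral comparison
  have hg_int : Integrable g m := by
    refine (integrable_const M).mono' ?_ (Filter.Eventually.of_forall fun y => by simpa using hM y)
    exact (hgu.measurable).aestronglyMeasurable
  have hgΔ_int : Integrable (fun y => g y + Δ) m := hg_int.add (integrable_const Δ)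
  have hintsle : ∫ y, s y ∂m ≤ ∫ y, g y ∂m + Δ * mX := by
    have h1 : ∫ y, s y ∂m ≤ ∫ y, (g y + Δ) ∂m := integral_mono hs_int hgΔ_int hsle
    rw [integral_add hg_int (integrable_const Δ), integral_const] at h1
    simp only [smul_eq_mul, hmX, Measure.real] at h1
    linarith
  -- combine
  have hsumv : ∑ i ∈ Finset.range n, Δ * ∫ y, v i y ∂m
      ≤ ∑ i ∈ Finset.range n, Δ * ((m (F i)).toReal + δ) := by
    apply Finset.sum_le_sum
    intro i _
    exact mul_le_mul_of_nonneg_left (hvI i) hΔpos.le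
  have hexp : ∑ i ∈ Finset.range n, Δ * ((m (F i)).toReal + δ)
      = (∑ i ∈ Finset.range n, Δ * (m (F i)).toReal) + 2 * M * δ := by
    have e0 : ∀ i ∈ Finset.range n, Δ * ((m (F i)).toReal + δ)
        = Δ * (m (F i)).toReal + Δ * δ := fun i _ => by ring
    rw [Finset.sum_congr rfl e0, Finset.sum_add_distrib, Finset.sum_const, Finset.card_range,
      nsmul_eq_mul]
    have e2 : (n : ℝ) * (Δ * δ) = 2 * M * δ := by rw [← mul_assoc, hnΔ]
    linarith [e2]
  have hinth0 : ∫ y, h0 y ∂m ≤ ∫ y, g y ∂m + Δ * mX + 2 * M * δ := by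
    rw [hint_h0]
    have := hintsle
    rw [hint_s] at this
    linarith [hsumv, hexp.le]
  -- final approximation step
  set ε' : ℝ := ε / (8 * (mX + 1)) with hε'
  have hε'pos : 0 < ε' := by positivity
  obtain ⟨a, haA, hab⟩ := h0_appr ε' hε'pos
  obtain ⟨Ca, hCa⟩ := hAb a haA
  have ha_int : Integrable a m := bounded_continuous_integrable m a (hAc a haA) Ca hCa
  have hconstmem : (fun _ : X => ε') ∈ A := A.algebraMap_mem ε'
  have hhmem : (fun y => a y + ε') ∈ A := A.add_mem haA hconstmem
  refine ⟨fun y => a y + ε', hhmem, fun y => ?_, ?_⟩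
  · show g y ≤ a y + ε'
    have h1 := (abs_le.mp (hab y)).2
    have h2 := hpt y
    linarith
  · show ∫ y, (a y + ε') ∂m ≤ (∫ y, g y ∂m) + ε
    have e1 : ∫ y, (a y + ε') ∂m = ∫ y, a y ∂m + ε' * mX := by
      rw [integral_add ha_int (integrable_const _), integral_const]
      simp [hmX, mul_comm, Measure.real]
    have h2 : ∀ y, a y ≤ h0 y + ε' := fun y => by
      have := abs_le.mp (hab y); linarith
    have hsum_int : Integrable (fun y => h0 y + ε') m := h0_int.add (integrable_const ε')
    have h3 : ∫ y, a y ∂m ≤ ∫ y, h0 y ∂m + ε' * mX := by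
      have h4 := integral_mono ha_int hsum_int h2
      rw [integral_add h0_int (integrable_const _), integral_const] at h4
      simp only [smul_eq_mul, hmX, Measure.real] at h4
      linarith
    rw [e1]
    have hδbound : 2 * M * δ = ε / 8 := by
      rw [hδdef]; field_simp; ring
    have hΔbd : Δ * mX ≤ ε / 4 :=
      le_trans (mul_le_mul_of_nonneg_left (by linarith) hΔpos.le) hΔmX
    have hε'bd : ε' * mX ≤ ε / 8 := by
      have he : ε' * (mX + 1) = ε / 8 := by
        rw [hε']; field_simp
      have h5 : ε' * mX ≤ ε' * (mX + 1) :=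
        mul_le_mul_of_nonneg_left (by linarith) hε'pos.le
      linarith
    linarith [hinth0, h3]

end Helpers


theorem stmt4 {X : Type*} [tX : TopologicalSpace X] [T2Space X] [MeasurableSpace X] [BorelSpace X]
    (m : Measure X) [IsFiniteMeasure m] [m.InnerRegular]
    (A : Subalgebra ℝ (X → ℝ))
    (hAc : ∀ f ∈ A, Continuous f)
    (hAb : ∀ f ∈ A, ∃ C : ℝ, ∀ x, |f x| ≤ C)
    (hAsep : ∀ x y : X, x ≠ y → ∃ f ∈ A, f x ≠ f y)
    (hAgen : tX = ⨅ f ∈ A, TopologicalSpace.induced f inferInstance)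
    (g : X → ℝ) (hgu : UpperSemicontinuous g) (hgb : ∃ C : ℝ, ∀ x, |g x| ≤ C) :
    (∀ x, g x = sInf {r : ℝ | ∃ h ∈ A, (∀ y, g y ≤ h y) ∧ r = h x}) ∧
    (∫ x, g x ∂m = sInf {r : ℝ | ∃ h ∈ A, (∀ y, g y ≤ h y) ∧ r = ∫ x, h x ∂m}) := by
  obtain ⟨C0, hC0⟩ := hgb
  set M : ℝ := max C0 0 + 1 with hMdef
  have hM0 : 0 < M := by positivity
  have hM : ∀ y, |g y| ≤ M := fun y => (hC0 y).trans (by simp [hMdef]; linarith [le_max_left C0 0])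
  have hMconst : (fun _ : X => M) ∈ A := A.algebraMap_mem M
  have hgleM : ∀ y, g y ≤ M := fun y => (abs_le.mp (hM y)).2
  constructor
  · intro x
    set S : Set ℝ := {r : ℝ | ∃ h ∈ A, (∀ y, g y ≤ h y) ∧ r = h x} with hS
    have hne : S.Nonempty := ⟨M, ⟨fun _ => M, hMconst, hgleM, rfl⟩⟩
    have hlb : ∀ r ∈ S, g x ≤ r := by
      rintro r ⟨h, _, hdom, rfl⟩
      exact hdom x
    have hbdd : BddBelow S := ⟨g x, fun r hr => hlb r hr⟩
    refine le_antisymm (le_csInf hne hlb) ?_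
    apply le_of_forall_pos_le_add
    intro ε hε
    obtain ⟨h, hhA, hdom, hhx⟩ := pointwise_lemma A hAgen g hgu M hgleM x ε hε
    calc sInf S ≤ h x := csInf_le hbdd ⟨h, hhA, hdom, rfl⟩
      _ ≤ g x + ε := hhx
  · set S : Set ℝ := {r : ℝ | ∃ h ∈ A, (∀ y, g y ≤ h y) ∧ r = ∫ x, h x ∂m} with hS
    have hne : S.Nonempty := ⟨∫ x, (fun _ : X => M) x ∂m, ⟨fun _ => M, hMconst, hgleM, rfl⟩⟩
    have hg_int : Integrable g m := by
      refine (integrable_const M).mono' ?_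
        (Filter.Eventually.of_forall fun y => by simpa using hM y)
      exact (hgu.measurable).aestronglyMeasurable
    have hlb : ∀ r ∈ S, ∫ x, g x ∂m ≤ r := by
      rintro r ⟨h, hhA, hdom, rfl⟩
      obtain ⟨Ch, hCh⟩ := hAb h hhA
      exact integral_mono hg_int (bounded_continuous_integrable m h (hAc h hhA) Ch hCh) hdom
    have hbdd : BddBelow S := ⟨∫ x, g x ∂m, fun r hr => hlb r hr⟩
    refine le_antisymm (le_csInf hne hlb) ?_
    apply le_of_forall_pos_le_add
    intro ε hε
    obtain ⟨h, hhA, hdom, hint⟩ := integral_lemma m hAgen hAc hAb g hgu M hM0 hM ε hε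
    calc sInf S ≤ ∫ x, h x ∂m := csInf_le hbdd ⟨h, hhA, hdom, rfl⟩
      _ ≤ ∫ x, g x ∂m + ε := hint
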